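/- Suppose for all s < t in an interval [c, d] and all ε ∈ (0, ρ/(t−s)) we have (ε/(1+ε)) g(s)² − C ε^{1+γ}(t−s)^γ ≤ (Λ(t) − Λ(s))/(t − s) ≤ ((1+ε)/ε) g(t)² + C ε^{1+γ}(t−s)^γ, where g : [c,d] → ℝ is continuous and γ ∈ (0, 1/2), C, ρ > 0. Then Λ is differentiable on (c, d) with Λ'(t) = g(t)² for all t. -/

import Mathlib

open Set Filter Topology

/-- If the two-sided finite-difference bound
`(ε/(1+ε)) g(s)² − C ε^(1+γ)(t−s)^γ ≤ (Λ(t) − Λ(s))/(t−s) ≤ ((1+ε)/ε) g(t)² + C ε^(1+γ)(t−s)^γ`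
holds for all `s < t` in `[c, d]` and all `0 < ε < ρ/(t−s)`, with `g` continuous, then `Λ` is
differentiable on `(c, d)` with derivative `g(t)²`. -/
theorem stmt_11 (c d ρ C γ : ℝ) (hcd : c < d) (hρ : 0 < ρ) (hC : 0 < C)
    (hγ : γ ∈ Ioo (0 : ℝ) (1 / 2)) (Λ g : ℝ → ℝ) (hg : ContinuousOn g (Icc c d))
    (H : ∀ s t : ℝ, c ≤ s → s < t → t ≤ d → ∀ ε : ℝ, 0 < ε → ε < ρ / (t - s) →
      (ε / (1 + ε)) * g s ^ 2 - C * ε ^ (1 + γ) * (t - s) ^ γ ≤ (Λ t - Λ s) / (t - s) ∧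
      (Λ t - Λ s) / (t - s) ≤ ((1 + ε) / ε) * g t ^ 2 + C * ε ^ (1 + γ) * (t - s) ^ γ) :
    ∀ t ∈ Ioo c d, HasDerivWithinAt Λ (g t ^ 2) (Icc c d) t := by
  obtain ⟨hγ0, hγ2⟩ := hγ
  intro t ht
  have htm : t ∈ Icc c d := ⟨ht.1.le, ht.2.le⟩
  set δ : ℝ := γ / (2 * (1 + γ)) with hδdef
  have h1γ : (0:ℝ) < 1 + γ := by linarith
  have hδ0 : 0 < δ := by positivity
  have hδ1 : δ < 1 := by
    rw [hδdef, div_lt_one (by linarith)]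
    linarith
  have h1δ : (0:ℝ) < 1 - δ := by linarith
  have hexp : -δ * (1 + γ) + γ = γ / 2 := by
    rw [hδdef]; field_simp; ring
  rw [hasDerivWithinAt_iff_tendsto_slope]
  set S := Icc c d \ {t} with hS
  -- limits of the auxiliary quantities
  have h1 : Tendsto (fun u => |u - t|) (𝓝[S] t) (𝓝 0) := by
    have : Tendsto (fun u : ℝ => |u - t|) (𝓝 t) (𝓝 |t - t|) :=
      ((continuous_id.sub continuous_const).abs).tendsto t
    simpa using this.mono_left nhdsWithin_le_nhds
  have hpow : ∀ p : ℝ, 0 < p → Tendsto (fun u => |u - t| ^ p) (𝓝[S] t) (𝓝 0) := by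
    intro p hp
    have hc : ContinuousAt (fun x : ℝ => x ^ p) 0 :=
      Real.continuousAt_rpow_const 0 p (Or.inr hp.le)
    have := hc.tendsto.comp h1
    simpa [Real.zero_rpow hp.ne', Function.comp_def] using this
  have hA := hpow δ hδ0
  have hB := hpow (γ / 2) (by linarith)
  have hgt : ContinuousWithinAt g (Icc c d) t := hg t htm
  have hmin : Tendsto (fun u => g (min u t)) (𝓝[S] t) (𝓝 (g t)) := by
    have hφ : Tendsto (fun u => min u t) (𝓝[S] t) (𝓝[Icc c d] t) := by
      apply tendsto_nhdsWithin_of_tendsto_nhds_of_eventually_within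
      · have : Tendsto (fun u : ℝ => min u t) (𝓝 t) (𝓝 (min t t)) :=
          (continuous_id.min continuous_const).tendsto t
        simpa using this.mono_left nhdsWithin_le_nhds
      · filter_upwards [eventually_mem_nhdsWithin] with u hu
        exact ⟨le_min hu.1.1 ht.1.le, min_le_of_left_le hu.1.2⟩
    exact hgt.tendsto.comp hφ
  have hmax : Tendsto (fun u => g (max u t)) (𝓝[S] t) (𝓝 (g t)) := by
    have hφ : Tendsto (fun u => max u t) (𝓝[S] t) (𝓝[Icc c d] t) := by
      apply tendsto_nhdsWithin_of_tendsto_nhds_of_eventually_within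
      · have : Tendsto (fun u : ℝ => max u t) (𝓝 t) (𝓝 (max t t)) :=
          (continuous_id.max continuous_const).tendsto t
        simpa using this.mono_left nhdsWithin_le_nhds
      · filter_upwards [eventually_mem_nhdsWithin] with u hu
        exact ⟨le_max_of_le_left hu.1.1, max_le hu.1.2 ht.2.le⟩
    exact hgt.tendsto.comp hφ
  have hlo : Tendsto (fun u => g (min u t) ^ 2 / (1 + |u - t| ^ δ) - C * |u - t| ^ (γ / 2))
      (𝓝[S] t) (𝓝 (g t ^ 2)) := by
    have hden : Tendsto (fun u => 1 + |u - t| ^ δ) (𝓝[S] t) (𝓝 (1 + 0)) :=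
      tendsto_const_nhds.add hA
    have hCB : Tendsto (fun u => C * |u - t| ^ (γ / 2)) (𝓝[S] t) (𝓝 (C * 0)) :=
      hB.const_mul C
    have := ((hmin.pow 2).div hden (by norm_num)).sub hCB
    simpa using this
  have hhi : Tendsto (fun u => (1 + |u - t| ^ δ) * g (max u t) ^ 2 + C * |u - t| ^ (γ / 2))
      (𝓝[S] t) (𝓝 (g t ^ 2)) := by
    have hden : Tendsto (fun u => 1 + |u - t| ^ δ) (𝓝[S] t) (𝓝 (1 + 0)) :=
      tendsto_const_nhds.add hA
    have hCB : Tendsto (fun u => C * |u - t| ^ (γ / 2)) (𝓝[S] t) (𝓝 (C * 0)) :=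
      hB.const_mul C
    have := (hden.mul (hmax.pow 2)).add hCB
    simpa using this
  -- the key two-sided eventual bound
  have key : ∀ᶠ u in 𝓝[S] t,
      g (min u t) ^ 2 / (1 + |u - t| ^ δ) - C * |u - t| ^ (γ / 2) ≤ slope Λ t u ∧
      slope Λ t u ≤ (1 + |u - t| ^ δ) * g (max u t) ^ 2 + C * |u - t| ^ (γ / 2) := by
    set r : ℝ := min 1 (ρ ^ ((1:ℝ) / (1 - δ))) with hr
    have hr0 : 0 < r := lt_min one_pos (Real.rpow_pos_of_pos hρ _)
    have hball : ∀ᶠ u in 𝓝[S] t, dist u t < r :=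
      eventually_nhdsWithin_of_eventually_nhds
        (eventually_of_mem (Metric.ball_mem_nhds t hr0) fun u hu => hu)
    filter_upwards [hball, eventually_mem_nhdsWithin] with u hdist hu
    have hune : u ≠ t := hu.2
    have habslt : |u - t| < r := by rwa [Real.dist_eq] at hdist
    have hrρ : ∀ x : ℝ, 0 < x → x < r → x ^ (1 - δ) < ρ := by
      intro x hx hxr
      have hxρ : x < ρ ^ ((1:ℝ) / (1 - δ)) := lt_of_lt_of_le hxr (min_le_right _ _)
      have h2 : x ^ (1 - δ) < (ρ ^ ((1:ℝ) / (1 - δ))) ^ (1 - δ) :=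
        Real.rpow_lt_rpow hx.le hxρ h1δ
      rwa [← Real.rpow_mul hρ.le, one_div_mul_cancel h1δ.ne', Real.rpow_one] at h2
    rcases lt_or_gt_of_ne hune with htu | htu
    · -- u < t : apply H with s = u, t = t
      have hpos : 0 < t - u := by linarith
      have habs : |u - t| = t - u := by rw [abs_sub_comm]; exact abs_of_pos hpos
      set ε : ℝ := (t - u) ^ (-δ) with hε
      set a : ℝ := (t - u) ^ δ with ha
      have ha0 : 0 < a := Real.rpow_pos_of_pos hpos δ
      have hε0 : 0 < ε := Real.rpow_pos_of_pos hpos _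
      have hεa : ε = a⁻¹ := Real.rpow_neg hpos.le δ
      have hεlt : ε < ρ / (t - u) := by
        rw [lt_div_iff₀ hpos]
        have e : ε * (t - u) = (t - u) ^ (1 - δ) := by
          nth_rewrite 1 [show t - u = (t - u) ^ (1:ℝ) by rw [Real.rpow_one]]
          rw [hε, ← Real.rpow_add hpos]; ring_nf
        rw [e]
        exact hrρ _ hpos (by rw [← habs]; exact habslt)
      obtain ⟨hL, hU⟩ := H u t hu.1.1 htu ht.2.le ε hε0 hεlt
      have herr : ε ^ (1 + γ) * (t - u) ^ γ = (t - u) ^ (γ / 2) := by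
        rw [hε, ← Real.rpow_mul hpos.le, ← Real.rpow_add hpos, hexp]
      have he1 : ε / (1 + ε) = 1 / (1 + a) := by
        rw [hεa]
        rw [div_eq_div_iff (by positivity) (by positivity)]
        field_simp
        ring
      have he2 : (1 + ε) / ε = 1 + a := by
        rw [hεa]
        field_simp
        ring
      have hslope : slope Λ t u = (Λ t - Λ u) / (t - u) := by
        rw [slope_comm, slope_def_field]
      rw [hslope, min_eq_left htu.le, max_eq_right htu.le, habs]
      constructor
      · calc g u ^ 2 / (1 + (t - u) ^ δ) - C * (t - u) ^ (γ / 2)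
            = (ε / (1 + ε)) * g u ^ 2 - C * ε ^ (1 + γ) * (t - u) ^ γ := by
              rw [he1, mul_assoc, herr]; ring
          _ ≤ (Λ t - Λ u) / (t - u) := hL
      · calc (Λ t - Λ u) / (t - u)
            ≤ ((1 + ε) / ε) * g t ^ 2 + C * ε ^ (1 + γ) * (t - u) ^ γ := hU
          _ = (1 + (t - u) ^ δ) * g t ^ 2 + C * (t - u) ^ (γ / 2) := by
              rw [he2, mul_assoc, herr]
    · -- t < u : apply H with s = t, t = u
      have hpos : 0 < u - t := by linarith
      have habs : |u - t| = u - t := abs_of_pos hpos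
      set ε : ℝ := (u - t) ^ (-δ) with hε
      set a : ℝ := (u - t) ^ δ with ha
      have ha0 : 0 < a := Real.rpow_pos_of_pos hpos δ
      have hε0 : 0 < ε := Real.rpow_pos_of_pos hpos _
      have hεa : ε = a⁻¹ := Real.rpow_neg hpos.le δ
      have hεlt : ε < ρ / (u - t) := by
        rw [lt_div_iff₀ hpos]
        have e : ε * (u - t) = (u - t) ^ (1 - δ) := by
          nth_rewrite 1 [show u - t = (u - t) ^ (1:ℝ) by rw [Real.rpow_one]]
          rw [hε, ← Real.rpow_add hpos]; ring_nf
        rw [e]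
        exact hrρ _ hpos (by rw [← habs]; exact habslt)
      obtain ⟨hL, hU⟩ := H t u ht.1.le htu hu.1.2 ε hε0 hεlt
      have herr : ε ^ (1 + γ) * (u - t) ^ γ = (u - t) ^ (γ / 2) := by
        rw [hε, ← Real.rpow_mul hpos.le, ← Real.rpow_add hpos, hexp]
      have he1 : ε / (1 + ε) = 1 / (1 + a) := by
        rw [hεa]
        rw [div_eq_div_iff (by positivity) (by positivity)]
        field_simp
        ring
      have he2 : (1 + ε) / ε = 1 + a := by
        rw [hεa]
        field_simp
        ring
      have hslope : slope Λ t u = (Λ u - Λ t) / (u - t) := by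
        rw [slope_def_field]
      rw [hslope, min_eq_right htu.le, max_eq_left htu.le, habs]
      constructor
      · calc g t ^ 2 / (1 + (u - t) ^ δ) - C * (u - t) ^ (γ / 2)
            = (ε / (1 + ε)) * g t ^ 2 - C * ε ^ (1 + γ) * (u - t) ^ γ := by
              rw [he1, mul_assoc, herr]; ring
          _ ≤ (Λ u - Λ t) / (u - t) := hL
      · calc (Λ u - Λ t) / (u - t)
            ≤ ((1 + ε) / ε) * g u ^ 2 + C * ε ^ (1 + γ) * (u - t) ^ γ := hU
          _ = (1 + (u - t) ^ δ) * g u ^ 2 + C * (u - t) ^ (γ / 2) := by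
              rw [he2, mul_assoc, herr]
  exact tendsto_of_tendsto_of_tendsto_of_le_of_le' hlo hhi
    (key.mono fun u h => h.1) (key.mono fun u h => h.2)
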